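/- For n ≥ 3, the number of matchings of the cycle graph on n vertices with exactly k edges is (n/(n-k))·C(n-k, k), for 0 ≤ 2k ≤ n. -/

import Mathlib

open Finset SimpleGraph
open Fin.NatCast

def lset (m k : ℕ) : Finset (Finset ℕ) :=
  ((Finset.range m).powerset).filter (fun S => S.card = k ∧ ∀ i ∈ S, i + 1 ∉ S)

lemma mem_lset {m k : ℕ} {S : Finset ℕ} :
    S ∈ lset m k ↔ S ⊆ Finset.range m ∧ S.card = k ∧ ∀ i ∈ S, i + 1 ∉ S := by
  simp [lset, and_assoc]

lemma lset_zero' (m : ℕ) : lset m 0 = {∅} := by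
  ext S
  simp only [mem_lset, Finset.mem_singleton, Finset.card_eq_zero]
  constructor
  · rintro ⟨-, h, -⟩; exact h
  · rintro rfl; simp

lemma lset_rec (m k : ℕ) :
    (lset (m + 2) (k + 1)).card = (lset (m + 1) (k + 1)).card + (lset m k).card := by
  rw [← Finset.card_filter_add_card_filter_not (p := fun S => m + 1 ∈ S)
    (s := lset (m + 2) (k + 1))]
  rw [add_comm]
  congr 1
  · -- without m+1 : equals lset (m+1) (k+1)
    congr 1
    ext S
    simp only [Finset.mem_filter, mem_lset]
    constructor
    · rintro ⟨⟨hsub, hc, hnc⟩, hnm⟩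
      refine ⟨fun x hx => ?_, hc, hnc⟩
      have := hsub hx
      simp only [Finset.mem_range] at this ⊢
      rcases Nat.lt_succ_iff_lt_or_eq.mp this with h | h
      · exact h
      · exact absurd (h ▸ hx) hnm
    · rintro ⟨hsub, hc, hnc⟩
      refine ⟨⟨hsub.trans (by intro x; simp only [Finset.mem_range]; omega), hc, hnc⟩, ?_⟩
      intro hmem
      have := hsub hmem
      simp at this
  · -- with m+1 : bijection with lset m k
    refine Finset.card_bij' (fun S _ => S.erase (m + 1)) (fun S _ => insert (m + 1) S)
      ?_ ?_ ?_ ?_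
    · rintro S hS
      simp only [Finset.mem_filter, mem_lset] at hS
      obtain ⟨⟨hsub, hc, hnc⟩, hmem⟩ := hS
      have hm : m ∉ S := fun h => hnc m h hmem
      refine mem_lset.mpr ⟨?_, ?_, ?_⟩
      · intro x hx
        simp only [Finset.mem_erase] at hx
        have := hsub hx.2
        simp only [Finset.mem_range] at this ⊢
        have : x ≠ m := fun h => hm (h ▸ hx.2)
        have := Finset.mem_range.mp (hsub hx.2)
        omega
      · rw [Finset.card_erase_of_mem hmem, hc]; omega
      · intro i hi
        simp only [Finset.mem_erase] at hi ⊢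
        intro h
        exact hnc i hi.2 h.2
    · rintro S hS
      rw [mem_lset] at hS
      obtain ⟨hsub, hc, hnc⟩ := hS
      have hnm : m + 1 ∉ S := fun h => by have := hsub h; simp at this
      refine Finset.mem_filter.mpr ⟨mem_lset.mpr ⟨?_, ?_, ?_⟩, by simp⟩
      · intro x hx
        simp only [Finset.mem_insert] at hx
        rcases hx with rfl | hx
        · simp
        · have := Finset.mem_range.mp (hsub hx); simp only [Finset.mem_range]; omega
      · rw [Finset.card_insert_of_notMem hnm, hc]
      · intro i hi
        simp only [Finset.mem_insert] at hi ⊢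
        rcases hi with rfl | hi
        · push_neg
          refine ⟨by omega, fun h => by have := hsub h; simp at this; omega⟩
        · push_neg
          have hir := Finset.mem_range.mp (hsub hi)
          exact ⟨by omega, hnc i hi⟩
    · intro S hS
      simp only [Finset.mem_filter] at hS
      exact Finset.insert_erase hS.2
    · intro S hS
      rw [mem_lset] at hS
      have : m + 1 ∉ S := fun h => by have := hS.1 h; simp at this
      exact Finset.erase_insert this

lemma lset_card : ∀ m k, (lset m k).card = (m + 1 - k).choose k := by
  intro m
  induction m using Nat.strong_induction_on with
  | _ m ih =>
    intro k
    match m, k with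
    | m, 0 => simp [lset_zero']
    | 0, k + 1 =>
      have : lset 0 (k + 1) = ∅ := by
        ext S; simp only [mem_lset, Finset.notMem_empty, iff_false]
        rintro ⟨hsub, hc, -⟩
        simp only [Finset.range_zero, Finset.subset_empty] at hsub
        subst hsub; simp at hc
      simp [this, Nat.choose_eq_zero_of_lt]
    | 1, k + 1 =>
      have : lset 1 (k + 1) = if k = 0 then {{0}} else ∅ := by
        ext S
        simp only [mem_lset]
        constructor
        · rintro ⟨hsub, hc, -⟩
          have := Finset.subset_singleton_iff.mp (by simpa using hsub)
          rcases this with rfl | rfl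
          · simp at hc
          · simp at hc; subst hc; simp
        · intro h
          split_ifs at h with h0
          · subst h0; simp at h; subst h; simp
          · simp at h
      rcases Nat.eq_zero_or_pos k with rfl | hk
      · simp [this]
      · rw [this, if_neg (by omega)]
        simp [Nat.choose_eq_zero_of_lt, Nat.sub_eq_zero_of_le (by omega : 2 ≤ k + 1)]
    | m + 2, k + 1 =>
      rw [lset_rec, ih (m + 1) (by omega) (k + 1), ih m (by omega) k]
      rcases le_or_gt (k + 1) (m + 1) with h | h
      · have h1 : m + 2 + 1 - (k + 1) = (m + 1 - k) + 1 := by omega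
        have h2 : m + 1 + 1 - (k + 1) = m + 1 - k := by omega
        rw [h1, h2, Nat.choose_succ_succ']
        ring
      · rw [Nat.choose_eq_zero_of_lt (by omega), Nat.choose_eq_zero_of_lt (by omega),
          Nat.choose_eq_zero_of_lt (by omega)]

def cset (n k : ℕ) : Finset (Finset ℕ) :=
  ((Finset.range n).powerset).filter (fun S => S.card = k ∧ ∀ i ∈ S, (i + 1) % n ∉ S)

lemma mem_cset {n k : ℕ} {S : Finset ℕ} :
    S ∈ cset n k ↔ S ⊆ Finset.range n ∧ S.card = k ∧ ∀ i ∈ S, (i + 1) % n ∉ S := by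
  simp [cset, and_assoc]

lemma cset_rec (n k : ℕ) (hn : 3 ≤ n) :
    (cset n (k + 1)).card = (lset (n - 1) (k + 1)).card + (lset (n - 3) k).card := by
  rw [← Finset.card_filter_add_card_filter_not (p := fun S => n - 1 ∈ S)
    (s := cset n (k + 1))]
  rw [add_comm]
  congr 1
  · -- without n-1 : equals lset (n-1) (k+1)
    congr 1
    ext S
    simp only [Finset.mem_filter, mem_cset, mem_lset]
    constructor
    · rintro ⟨⟨hsub, hc, hnc⟩, hnm⟩
      refine ⟨fun x hx => ?_, hc, fun i hi hmem => ?_⟩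
      · have := Finset.mem_range.mp (hsub hx)
        have : x ≠ n - 1 := fun h => hnm (h ▸ hx)
        simp only [Finset.mem_range]; omega
      · have h1 : i < n - 1 := by
          have := Finset.mem_range.mp (hsub hi)
          have : i ≠ n - 1 := fun h => hnm (h ▸ hi)
          omega
        have : (i + 1) % n = i + 1 := Nat.mod_eq_of_lt (by omega)
        exact hnc i hi (by rwa [this])
    · rintro ⟨hsub, hc, hnc⟩
      have hnm : n - 1 ∉ S := fun h => by
        have := Finset.mem_range.mp (hsub h); omega
      refine ⟨⟨hsub.trans (fun x hx => ?_), hc, fun i hi hmem => ?_⟩, hnm⟩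
      · simp only [Finset.mem_range] at hx ⊢; omega
      · have h1 : i < n - 1 := Finset.mem_range.mp (hsub hi)
        have : (i + 1) % n = i + 1 := Nat.mod_eq_of_lt (by omega)
        exact hnc i hi (by rwa [this] at hmem)
  · -- with n-1 : bijection with lset (n-3) k
    refine Finset.card_bij' (fun S _ => (S.erase (n - 1)).image (· - 1))
      (fun S _ => insert (n - 1) (S.image (· + 1))) ?_ ?_ ?_ ?_
    · rintro S hS
      simp only [Finset.mem_filter, mem_cset] at hS
      obtain ⟨⟨hsub, hc, hnc⟩, hmem⟩ := hS
      have h0 : 0 ∉ S := by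
        have := hnc (n - 1) hmem
        have he : (n - 1 + 1) % n = 0 := by
          have : n - 1 + 1 = n := by omega
          rw [this, Nat.mod_self]
        rwa [he] at this
      have h2 : n - 2 ∉ S := by
        intro h
        have := hnc (n - 2) h
        have he : (n - 2 + 1) % n = n - 1 := by
          have h' : n - 2 + 1 = n - 1 := by omega
          rw [h', Nat.mod_eq_of_lt (by omega)]
        rw [he] at this; exact this hmem
      have hbound : ∀ x ∈ S.erase (n - 1), 1 ≤ x ∧ x ≤ n - 3 := by
        intro x hx
        simp only [Finset.mem_erase] at hx
        have hr := Finset.mem_range.mp (hsub hx.2)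
        have hx1 : x ≠ 0 := fun h => h0 (h ▸ hx.2)
        have hx2 : x ≠ n - 2 := fun h => h2 (h ▸ hx.2)
        have hx3 : x ≠ n - 1 := hx.1
        omega
      refine mem_lset.mpr ⟨?_, ?_, ?_⟩
      · intro y hy
        simp only [Finset.mem_image] at hy
        obtain ⟨x, hx, rfl⟩ := hy
        have := hbound x hx
        simp only [Finset.mem_range]; omega
      · rw [Finset.card_image_of_injOn, Finset.card_erase_of_mem hmem, hc]
        · omega
        · intro a ha b hb hab
          simp only [Finset.mem_coe] at ha hb
          have h1 := hbound a ha; have h2 := hbound b hb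
          simp only at hab; omega
      · intro j hj hj1
        simp only [Finset.mem_image] at hj hj1
        obtain ⟨x, hx, rfl⟩ := hj
        obtain ⟨y, hy, hxy⟩ := hj1
        have hbx := hbound x hx
        have hby := hbound y hy
        have hyx : y = x + 1 := by omega
        simp only [Finset.mem_erase] at hx hy
        have := hnc x hx.2
        have he : (x + 1) % n = x + 1 := Nat.mod_eq_of_lt (by omega)
        rw [he] at this
        exact this (hyx ▸ hy.2)
    · rintro S hS
      rw [mem_lset] at hS
      obtain ⟨hsub, hc, hnc⟩ := hS
      have hb : ∀ x ∈ S, x < n - 3 := fun x hx => Finset.mem_range.mp (hsub hx)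
      have hni : n - 1 ∉ S.image (· + 1) := by
        simp only [Finset.mem_image]
        rintro ⟨x, hx, hx1⟩
        have := hb x hx; omega
      refine Finset.mem_filter.mpr ⟨mem_cset.mpr ⟨?_, ?_, ?_⟩, by simp⟩
      · intro x hx
        simp only [Finset.mem_insert, Finset.mem_image] at hx
        simp only [Finset.mem_range]
        rcases hx with rfl | ⟨y, hy, rfl⟩
        · omega
        · have := hb y hy; omega
      · rw [Finset.card_insert_of_notMem hni,
          Finset.card_image_of_injOn (fun a _ b _ h => by omega), hc]
      · intro i hi hmem
        simp only [Finset.mem_insert, Finset.mem_image] at hi hmem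
        rcases hi with rfl | ⟨y, hy, rfl⟩
        · have he : (n - 1 + 1) % n = 0 := by
            have : n - 1 + 1 = n := by omega
            rw [this, Nat.mod_self]
          rw [he] at hmem
          rcases hmem with h | ⟨z, hz, hz1⟩
          · omega
          · omega
        · have hby := hb y hy
          have he : (y + 1 + 1) % n = y + 2 := Nat.mod_eq_of_lt (by omega)
          rw [he] at hmem
          rcases hmem with h | ⟨z, hz, hz1⟩
          · omega
          · have : z = y + 1 := by omega
            exact hnc y hy (this ▸ hz)
    · intro S hS
      simp only [Finset.mem_filter, mem_cset] at hS
      obtain ⟨⟨hsub, hc, hnc⟩, hmem⟩ := hS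
      have h0 : 0 ∉ S := by
        have := hnc (n - 1) hmem
        have he : (n - 1 + 1) % n = 0 := by
          have : n - 1 + 1 = n := by omega
          rw [this, Nat.mod_self]
        rwa [he] at this
      have himg : ((S.erase (n - 1)).image (· - 1)).image (· + 1) = S.erase (n - 1) := by
        rw [Finset.image_image]
        refine Finset.image_congr (fun x hx => ?_) |>.trans Finset.image_id
        simp only [Finset.mem_coe, Finset.mem_erase] at hx
        have : x ≠ 0 := fun h => h0 (h ▸ hx.2)
        simp only [Function.comp_apply, id_eq]
        omega
      rw [himg, Finset.insert_erase hmem]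
    · intro S hS
      rw [mem_lset] at hS
      have hni : n - 1 ∉ S.image (· + 1) := by
        simp only [Finset.mem_image]
        rintro ⟨x, hx, hx1⟩
        have := Finset.mem_range.mp (hS.1 hx); omega
      rw [Finset.erase_insert hni, Finset.image_image]
      refine Finset.image_congr (fun x hx => ?_) |>.trans Finset.image_id
      simp only [Function.comp_apply, id_eq]
      omega

lemma cset_zero (n : ℕ) : cset n 0 = {∅} := by
  ext S
  simp only [mem_cset, Finset.mem_singleton, Finset.card_eq_zero]
  constructor
  · rintro ⟨-, h, -⟩; exact h
  · rintro rfl; simp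

lemma cset_card (n k : ℕ) (hn : 3 ≤ n) (hk : 2 * k ≤ n) :
    (cset n k).card = n * (n - k).choose k / (n - k) := by
  rcases k with _ | k'
  · rw [cset_zero, Finset.card_singleton, Nat.sub_zero, Nat.choose_zero_right, mul_one,
      Nat.div_self (by omega)]
  · rw [cset_rec n k' hn, lset_card, lset_card]
    have h1 : n - 1 + 1 - (k' + 1) = (n - (k' + 1) - 1) + 1 := by omega
    have h2 : n - 3 + 1 - k' = n - (k' + 1) - 1 := by omega
    set m := n - (k' + 1) - 1 with hm
    rw [h1, h2]
    have hnk : n - (k' + 1) = m + 1 := by omega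
    rw [hnk]
    symm
    apply Nat.div_eq_of_eq_mul_left (by omega)
    have key : (m + 1) * m.choose k' = (m + 1).choose (k' + 1) * (k' + 1) :=
      Nat.add_one_mul_choose_eq m k'
    have hn' : n = (m + 1) + (k' + 1) := by omega
    nlinarith [key]


def cedge (m : ℕ) (i : ℕ) : Sym2 (Fin (m+3)) := s((i : Fin (m+3)), ((i+1 : ℕ) : Fin (m+3)))

lemma cedge_succ (m i : ℕ) : ((i+1 : ℕ) : Fin (m+3)) = (i : Fin (m+3)) + 1 := by
  push_cast
  ring

lemma fin_val_one (m : ℕ) : ((1 : Fin (m+3)) : ℕ) = 1 := Fin.val_one (m+1)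

lemma cedge_mem_edgeSet (m i : ℕ) : cedge m i ∈ (cycleGraph (m+3)).edgeSet := by
  rw [cedge, SimpleGraph.mem_edgeSet, cedge_succ, cycleGraph_adj']
  right
  rw [add_sub_cancel_left]
  exact fin_val_one m

lemma edge_eq_cedge (m : ℕ) {e : Sym2 (Fin (m+3))}
    (he : e ∈ (cycleGraph (m+3)).edgeSet) : ∃ i < m + 3, e = cedge m i := by
  induction e with
  | _ u v =>
    rw [SimpleGraph.mem_edgeSet, cycleGraph_adj'] at he
    rcases he with h | h
    · -- (u - v).val = 1, so u = v + 1
      refine ⟨v.val, v.isLt, ?_⟩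
      rw [cedge, cedge_succ, Fin.cast_val_eq_self]
      have hs : u - v = 1 := by
        apply Fin.ext
        rw [h, fin_val_one]
      have : u = v + 1 := by
        rw [sub_eq_iff_eq_add] at hs
        rw [hs]; exact add_comm _ _
      rw [this, Sym2.eq_swap]
    · refine ⟨u.val, u.isLt, ?_⟩
      rw [cedge, cedge_succ, Fin.cast_val_eq_self]
      have hs : v - u = 1 := by
        apply Fin.ext
        rw [h, fin_val_one]
      have : v = u + 1 := by
        rw [sub_eq_iff_eq_add] at hs
        rw [hs]; exact add_comm _ _
      rw [this]

lemma mod_succ_eval {n a : ℕ} (ha : a < n) :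
    (a + 1) % n = if a + 1 = n then 0 else a + 1 := by
  split_ifs with h
  · rw [h, Nat.mod_self]
  · exact Nat.mod_eq_of_lt (by omega)

lemma cedge_injOn (m : ℕ) {i j : ℕ} (hi : i < m+3) (hj : j < m+3)
    (h : cedge m i = cedge m j) : i = j := by
  rw [cedge, cedge, Sym2.eq_iff] at h
  have e1 : ((i : Fin (m+3)) : ℕ) = i := by rw [Fin.val_natCast]; exact Nat.mod_eq_of_lt hi
  have e2 : ((j : Fin (m+3)) : ℕ) = j := by rw [Fin.val_natCast]; exact Nat.mod_eq_of_lt hj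
  have e3 : (((i+1 : ℕ) : Fin (m+3)) : ℕ) = (i+1) % (m+3) := Fin.val_natCast _ _
  have e4 : (((j+1 : ℕ) : Fin (m+3)) : ℕ) = (j+1) % (m+3) := Fin.val_natCast _ _
  have m1 := mod_succ_eval (n := m+3) hi
  have m2 := mod_succ_eval (n := m+3) hj
  rcases h with ⟨h1, h2⟩ | ⟨h1, h2⟩
  · have := congrArg Fin.val h1
    rw [e1, e2] at this
    exact this
  · have v1 := congrArg Fin.val h1
    have v2 := congrArg Fin.val h2
    rw [e1, e4] at v1
    rw [e2, e3] at v2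
    split_ifs at m1 m2 <;> omega


lemma matchings_card_eq (m k : ℕ) :
    Nat.card {s : Finset (Sym2 (Fin (m+3))) //
        (∀ e ∈ s, e ∈ (SimpleGraph.cycleGraph (m+3)).edgeSet) ∧
        (∀ e ∈ s, ∀ f ∈ s, e ≠ f → ∀ v, v ∈ e → v ∉ f) ∧
        s.card = k} = (cset (m+3) k).card := by
  classical
  rw [Nat.card_eq_fintype_card, Fintype.card_subtype]
  symm
  refine Finset.card_bij (fun S _ => S.image (cedge m)) ?_ ?_ ?_
  · -- membership
    intro S hS
    rw [mem_cset] at hS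
    obtain ⟨hsub, hc, hnc⟩ := hS
    have hb : ∀ x ∈ S, x < m + 3 := fun x hx => Finset.mem_range.mp (hsub hx)
    simp only [Finset.mem_filter, Finset.mem_univ, true_and]
    refine ⟨?_, ?_, ?_⟩
    · intro e he
      simp only [Finset.mem_image] at he
      obtain ⟨i, hi, rfl⟩ := he
      exact cedge_mem_edgeSet m i
    · intro e he f hf hef v hve hvf
      simp only [Finset.mem_image] at he hf
      obtain ⟨i, hi, rfl⟩ := he
      obtain ⟨j, hj, rfl⟩ := hf
      have hij : i ≠ j := fun h => hef (by rw [h])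
      have hbi := hb i hi
      have hbj := hb j hj
      rw [cedge, Sym2.mem_iff] at hve hvf
      have e1 : ((i : Fin (m+3)) : ℕ) = i := by
        rw [Fin.val_natCast]; exact Nat.mod_eq_of_lt hbi
      have e2 : ((j : Fin (m+3)) : ℕ) = j := by
        rw [Fin.val_natCast]; exact Nat.mod_eq_of_lt hbj
      have e3 : (((i+1 : ℕ) : Fin (m+3)) : ℕ) = (i+1) % (m+3) := Fin.val_natCast _ _
      have e4 : (((j+1 : ℕ) : Fin (m+3)) : ℕ) = (j+1) % (m+3) := Fin.val_natCast _ _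
      rcases hve with rfl | rfl <;> rcases hvf with h | h <;>
        have h' := congrArg Fin.val h
      · rw [e1, e2] at h'
        exact hij h'
      · rw [e1, e4] at h'
        rw [h'] at hi
        exact hnc j hj hi
      · rw [e3, e2] at h'
        rw [← h'] at hj
        exact hnc i hi hj
      · rw [e3, e4] at h'
        have m1 := mod_succ_eval (n := m+3) hbi
        have m2 := mod_succ_eval (n := m+3) hbj
        have : i = j := by split_ifs at m1 m2 <;> omega
        exact hij this
    · rw [Finset.card_image_of_injOn, hc]
      intro a ha b hb' hab
      simp only [Finset.mem_coe] at ha hb'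
      exact cedge_injOn m (hb a ha) (hb b hb') hab
  · -- injective
    intro S hS T hT h
    rw [mem_cset] at hS hT
    have key : ∀ A B : Finset ℕ, A ⊆ Finset.range (m+3) → B ⊆ Finset.range (m+3) →
        A.image (cedge m) = B.image (cedge m) → A ⊆ B := by
      intro A B hA hB hAB x hx
      have : cedge m x ∈ B.image (cedge m) := hAB ▸ Finset.mem_image_of_mem _ hx
      obtain ⟨y, hy, he⟩ := Finset.mem_image.mp this
      have := cedge_injOn m (Finset.mem_range.mp (hB hy)) (Finset.mem_range.mp (hA hx)) he
      exact this ▸ hy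
    exact Finset.Subset.antisymm (key S T hS.1 hT.1 h) (key T S hT.1 hS.1 h.symm)
  · -- surjective
    intro s hs
    simp only [Finset.mem_filter, Finset.mem_univ, true_and] at hs
    obtain ⟨hedge, hdisj, hcard⟩ := hs
    refine ⟨(Finset.range (m+3)).filter (fun i => cedge m i ∈ s), ?_, ?_⟩
    · -- membership in cset
      have himg : ((Finset.range (m+3)).filter (fun i => cedge m i ∈ s)).image (cedge m) = s := by
        ext e
        simp only [Finset.mem_image, Finset.mem_filter, Finset.mem_range]
        constructor
        · rintro ⟨i, ⟨-, hi⟩, rfl⟩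
          exact hi
        · intro he
          obtain ⟨i, hi, rfl⟩ := edge_eq_cedge m (hedge e he)
          exact ⟨i, ⟨hi, he⟩, rfl⟩
      rw [mem_cset]
      refine ⟨Finset.filter_subset _ _, ?_, ?_⟩
      · have hinj : Set.InjOn (cedge m)
            ↑((Finset.range (m+3)).filter (fun i => cedge m i ∈ s)) := by
          intro a ha b hb hab
          simp only [Finset.mem_coe, Finset.mem_filter, Finset.mem_range] at ha hb
          exact cedge_injOn m ha.1 hb.1 hab
        have h' := Finset.card_image_of_injOn hinj
        rw [himg] at h'
        rw [← h']
        exact hcard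
      · intro i hi hmem
        simp only [Finset.mem_filter, Finset.mem_range] at hi hmem
        set j := (i + 1) % (m + 3) with hj
        have hjlt : j < m + 3 := Nat.mod_lt _ (by omega)
        have m1 := mod_succ_eval (n := m+3) hi.1
        have hij : i ≠ j := by rw [hj]; split_ifs at m1 <;> omega
        have hne : cedge m i ≠ cedge m j :=
          fun h => hij (cedge_injOn m hi.1 hjlt h)
        have hv1 : ((i+1 : ℕ) : Fin (m+3)) ∈ cedge m i := by
          rw [cedge, Sym2.mem_iff]; right; rfl
        have hv2 : ((i+1 : ℕ) : Fin (m+3)) ∈ cedge m j := by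
          rw [cedge, Sym2.mem_iff]; left
          apply Fin.ext
          rw [Fin.val_natCast, Fin.val_natCast, Nat.mod_eq_of_lt hjlt]
        exact hdisj _ hi.2 _ hmem.2 hne _ hv1 hv2
    · exact (by
        have himg : ((Finset.range (m+3)).filter (fun i => cedge m i ∈ s)).image (cedge m) = s := by
          ext e
          simp only [Finset.mem_image, Finset.mem_filter, Finset.mem_range]
          constructor
          · rintro ⟨i, ⟨-, hi⟩, rfl⟩
            exact hi
          · intro he
            obtain ⟨i, hi, rfl⟩ := edge_eq_cedge m (hedge e he)
            exact ⟨i, ⟨hi, he⟩, rfl⟩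
        exact himg)

/-- For `n ≥ 3` and `0 ≤ 2k ≤ n`, the number of matchings of the cycle graph on `n`
vertices with exactly `k` edges is `(n/(n-k))·C(n-k, k)`. -/
theorem cycle_graph_matchings_count (n k : ℕ) (hn : 3 ≤ n) (hk : 2 * k ≤ n) :
    Nat.card {s : Finset (Sym2 (Fin n)) //
        (∀ e ∈ s, e ∈ (SimpleGraph.cycleGraph n).edgeSet) ∧
        (∀ e ∈ s, ∀ f ∈ s, e ≠ f → ∀ v, v ∈ e → v ∉ f) ∧
        s.card = k} = n * (n - k).choose k / (n - k) := by
  obtain ⟨m, rfl⟩ : ∃ m, n = m + 3 := ⟨n - 3, by omega⟩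
  rw [matchings_card_eq]
  exact cset_card (m+3) k hn hk
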